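/- Let R_o, R_d have joint density f(r_o,r_d) = (2πρλ)² r_o r_d exp(−πρλ r_d²) on 0 ≤ r_o ≤ r_d, and τ ∈ (0,1). Conditioned on the event {R_o > τ R_d}, the CDF of R_o is F(r) = 1 − [1 − τ² exp(−πρλ r²(τ^{−2} − 1))] / [(1 − τ²) exp(πρλ r²)] for r > 0. -/

import Mathlib

open MeasureTheory Set Real

lemma int_helper (a b c : ℝ) (ha : a ≠ 0) :
    ∫ x in b..c, x * Real.exp (-a * x ^ 2)
      = (Real.exp (-a * b ^ 2) - Real.exp (-a * c ^ 2)) / (2 * a) := by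
  have h : ∀ x ∈ Set.uIcc b c,
      HasDerivAt (fun x => -Real.exp (-a * x ^ 2) / (2 * a)) (x * Real.exp (-a * x ^ 2)) x := by
    intro x _
    have h1 : HasDerivAt (fun x : ℝ => -a * x ^ 2) (-a * (2 * x)) x := by
      simpa using (hasDerivAt_pow 2 x).const_mul (-a)
    have h2 := (h1.exp.neg).div_const (2 * a)
    refine h2.congr_deriv ?_
    rw [div_eq_iff (mul_ne_zero two_ne_zero ha)]
    ring
  have hcont : IntervalIntegrable (fun x => x * Real.exp (-a * x ^ 2)) volume b c :=
    (by continuity : Continuous fun x : ℝ => x * Real.exp (-a * x ^ 2)).intervalIntegrable b c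
  rw [intervalIntegral.integral_eq_sub_of_hasDerivAt h hcont]
  ring

set_option maxHeartbeats 1000000 in
theorem ce_user_Ro_cdf (ρ l τ : ℝ) (hρ : 0 < ρ) (hl : 0 < l)
    (hτ : τ ∈ Set.Ioo (0 : ℝ) 1) (r : ℝ) (hr : 0 < r) :
    (∫ ro in Ioc (0 : ℝ) r, ∫ rd in Ico ro (ro / τ),
        (2 * π * ρ * l) ^ 2 * ro * rd * Real.exp (-(π * ρ * l) * rd ^ 2)) / (1 - τ ^ 2)
      = 1 - (1 - τ ^ 2 * Real.exp (-(π * ρ * l) * r ^ 2 * ((τ ^ 2)⁻¹ - 1)))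
          / ((1 - τ ^ 2) * Real.exp ((π * ρ * l) * r ^ 2)) := by
  obtain ⟨hτ0, hτ1⟩ := hτ
  have hπ := Real.pi_pos
  set a := π * ρ * l with ha_def
  have ha : 0 < a := by positivity
  have hτ2 : τ ^ 2 ≠ 0 := by positivity
  have hb : (0:ℝ) < a / τ ^ 2 := by positivity
  have key : ∀ ro ∈ Ioc (0:ℝ) r,
      (∫ rd in Ico ro (ro / τ), (2 * π * ρ * l) ^ 2 * ro * rd * Real.exp (-(π * ρ * l) * rd ^ 2))
        = 2 * a * (ro * Real.exp (-a * ro ^ 2)) - 2 * a * (ro * Real.exp (-(a / τ ^ 2) * ro ^ 2)) := by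
    intro ro hro
    have hle : ro ≤ ro / τ := by
      rw [le_div_iff₀ hτ0]
      exact mul_le_of_le_one_right hro.1.le hτ1.le
    rw [MeasureTheory.integral_Ico_eq_integral_Ioo, ← MeasureTheory.integral_Ioc_eq_integral_Ioo, ← intervalIntegral.integral_of_le hle]
    have heq : ∀ rd : ℝ, (2 * π * ρ * l) ^ 2 * ro * rd * Real.exp (-(π * ρ * l) * rd ^ 2)
        = ((2 * π * ρ * l) ^ 2 * ro) * (rd * Real.exp (-a * rd ^ 2)) := by
      intro rd; rw [ha_def]; ring
    simp_rw [heq]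
    rw [intervalIntegral.integral_const_mul, int_helper a ro (ro / τ) ha.ne']
    have h2 : -a * (ro / τ) ^ 2 = -(a / τ ^ 2) * ro ^ 2 := by field_simp
    rw [h2, ha_def]
    field_simp
  rw [MeasureTheory.setIntegral_congr_fun measurableSet_Ioc key,
    ← intervalIntegral.integral_of_le hr.le]
  have hi1 : IntervalIntegrable (fun ro : ℝ => 2 * a * (ro * Real.exp (-a * ro ^ 2))) volume 0 r :=
    (by continuity : Continuous fun ro : ℝ => 2 * a * (ro * Real.exp (-a * ro ^ 2))).intervalIntegrable 0 r
  have hi2 : IntervalIntegrable (fun ro : ℝ => 2 * a * (ro * Real.exp (-(a / τ ^ 2) * ro ^ 2))) volume 0 r :=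
    (by continuity : Continuous fun ro : ℝ => 2 * a * (ro * Real.exp (-(a / τ ^ 2) * ro ^ 2))).intervalIntegrable 0 r
  rw [intervalIntegral.integral_sub hi1 hi2, intervalIntegral.integral_const_mul,
    intervalIntegral.integral_const_mul, int_helper a 0 r ha.ne', int_helper (a / τ ^ 2) 0 r hb.ne']
  have e1 : Real.exp (-(π * ρ * l) * r ^ 2 * ((τ ^ 2)⁻¹ - 1))
      = Real.exp (-(a / τ ^ 2) * r ^ 2) * Real.exp (a * r ^ 2) := by
    rw [← Real.exp_add]; congr 1; rw [ha_def]; field_simp; ring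
  rw [e1]
  have e2 : Real.exp (-a * r ^ 2) = (Real.exp (a * r ^ 2))⁻¹ := by
    rw [← Real.exp_neg]; ring_nf
  rw [show Real.exp ((π * ρ * l) * r ^ 2) = Real.exp (a * r ^ 2) from rfl, e2]
  have h1τ : (1 : ℝ) - τ ^ 2 ≠ 0 := by nlinarith
  have hex : Real.exp (a * r ^ 2) ≠ 0 := Real.exp_ne_zero _
  norm_num
  field_simp
  ring
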